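/- Let X be a Tychonoff space, Y ⊆ X. If D and B are disjoint countable subsets of Y and X is b_Y-discrete (every countable subset of Y is closed in Y and C*-embedded in X), then there exist disjoint zero-sets Z_D, Z_B of X with D ⊆ Z_D and B ⊆ Z_B. -/

import Mathlib

def CStarEmbedded (X : Type*) [TopologicalSpace X] (S : Set X) : Prop :=
  ∀ f : C(S, ℝ), (∃ M, ∀ s, |f s| ≤ M) → ∃ g : C(X, ℝ), ∀ s : S, g ↑s = f s

def BDiscreteOn (X : Type*) [TopologicalSpace X] (Y : Set X) : Prop :=
  ∀ S : Set X, S ⊆ Y → S.Countable →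
    IsClosed ((Subtype.val ⁻¹' S : Set Y)) ∧ CStarEmbedded X S

theorem bDiscrete_separating_zero_sets (X : Type*) [TopologicalSpace X] [T35Space X]
    (Y D B : Set X) (hDY : D ⊆ Y) (hBY : B ⊆ Y)
    (hDc : D.Countable) (hBc : B.Countable) (hdisj : Disjoint D B)
    (hb : BDiscreteOn X Y) :
    ∃ f g : C(X, ℝ), Disjoint (f ⁻¹' {0}) (g ⁻¹' {0}) ∧
      D ⊆ f ⁻¹' {0} ∧ B ⊆ g ⁻¹' {0} := by
  classical
  set S : Set X := D ∪ B with hS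
  have hSY : S ⊆ Y := Set.union_subset hDY hBY
  have hSc : S.Countable := hDc.union hBc
  obtain ⟨-, hCstar⟩ := hb S hSY hSc
  obtain ⟨hDcl, -⟩ := hb D hDY hDc
  obtain ⟨hBcl, -⟩ := hb B hBY hBc
  -- the inclusion S → Y
  have hinc : Continuous (Set.inclusion hSY) := continuous_inclusion hSY
  have hDclS : IsClosed ((Subtype.val ⁻¹' D : Set S)) := by
    have := hDcl.preimage hinc
    convert this using 1
    rfl
  have hBclS : IsClosed ((Subtype.val ⁻¹' B : Set S)) := by
    have := hBcl.preimage hinc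
    convert this using 1
    rfl
  -- the set of points of S in B is clopen
  have hTclopen : IsClopen ((Subtype.val ⁻¹' B : Set S)) := by
    refine ⟨hBclS, ?_⟩
    have : ((Subtype.val ⁻¹' B : Set S)) = (Subtype.val ⁻¹' D : Set S)ᶜ := by
      ext ⟨x, hx⟩
      simp only [Set.mem_preimage, Set.mem_compl_iff]
      constructor
      · intro hxB hxD
        exact hdisj.le_bot ⟨hxD, hxB⟩
      · intro hxD
        rcases hx with h | h
        · exact absurd h hxD
        · exact h
    rw [this]
    exact hDclS.isOpen_compl
  have hfrontier : frontier {s : S | (s : X) ∈ B} = ∅ := by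
    have : {s : S | (s : X) ∈ B} = (Subtype.val ⁻¹' B : Set S) := rfl
    rw [this, hTclopen.frontier_eq]
  have hcont : Continuous (fun s : S => if (s : X) ∈ B then (1 : ℝ) else 0) := by
    apply continuous_if (fun a ha => ?_) continuous_const.continuousOn continuous_const.continuousOn
    rw [hfrontier] at ha; exact absurd ha (Set.notMem_empty a)
  obtain ⟨g, hg⟩ := hCstar ⟨_, hcont⟩ ⟨1, by
    intro s
    dsimp
    split <;> norm_num⟩
  refine ⟨g, g - ContinuousMap.const X 1, ?_, ?_, ?_⟩
  · rw [Set.disjoint_left]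
    rintro x hx hx'
    simp only [Set.mem_preimage, Set.mem_singleton_iff, ContinuousMap.sub_apply,
      ContinuousMap.const_apply, sub_eq_zero] at hx hx'
    rw [hx] at hx'; norm_num at hx'
  · intro x hxD
    have hs : x ∈ S := Or.inl hxD
    have := hg ⟨x, hs⟩
    simp only [Set.mem_preimage, Set.mem_singleton_iff]
    rw [this]
    dsimp
    rw [if_neg (fun hxB => hdisj.le_bot ⟨hxD, hxB⟩)]
  · intro x hxB
    have hs : x ∈ S := Or.inr hxB
    have := hg ⟨x, hs⟩
    simp only [Set.mem_preimage, Set.mem_singleton_iff, ContinuousMap.sub_apply,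
      ContinuousMap.const_apply, sub_eq_zero]
    rw [this]
    dsimp
    rw [if_pos hxB]
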